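/- Fix n ≥ 2, α ∈ (0,n), and λ ∈ ℝ. Let R : ℝⁿ → ℝⁿ be the reflection across the hyperplane {x : x·e₁ = λ}, i.e. R(x) = x − 2((x·e₁) − λ) e₁. Let E ⊂ ℝⁿ be a bounded Lebesgue measurable set, let Σ = E ∩ {x : x·e₁ < λ}, and suppose the reflected set R(Σ) is contained in E up to a Lebesgue null set. Let G = (E ∩ {x : x·e₁ > λ}) \ R(Σ). Then for every x ∈ ℝⁿ, v_E(R(x)) − v_E(x) = ∫_G ( |R(x) − y|^{−α} − |x − y|^{−α} ) dy. -/

import Mathlib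

open MeasureTheory Metric Set Bornology

lemma integrableOn_rpow_neg_norm_closedBall' {n : ℕ} {α : ℝ} (hα₀ : 0 < α) (hα₁ : α < n)
    (ρ : ℝ) :
    IntegrableOn (fun y : EuclideanSpace ℝ (Fin n) => ‖y‖ ^ (-α)) (closedBall 0 ρ) := by
  have hn : 0 < n := by exact_mod_cast hα₀.trans hα₁
  have : Fact (0 < n) := ⟨hn⟩
  have hmeas : Measurable (fun y : EuclideanSpace ℝ (Fin n) => ‖y‖ ^ (-α)) := by fun_prop
  constructor
  · exact hmeas.aestronglyMeasurable
  · have hnn : ∀ y : EuclideanSpace ℝ (Fin n), 0 ≤ ‖y‖ ^ (-α) :=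
      fun y => Real.rpow_nonneg (norm_nonneg _) _
    have hcalc : (∫⁻ y in closedBall (0 : EuclideanSpace ℝ (Fin n)) ρ, ‖‖y‖ ^ (-α)‖ₑ) =
        ∫⁻ y in closedBall (0 : EuclideanSpace ℝ (Fin n)) ρ, ENNReal.ofReal (‖y‖ ^ (-α)) :=
      lintegral_enorm_of_nonneg fun y => hnn y
    rw [HasFiniteIntegral, hcalc]
    rw [lintegral_eq_lintegral_meas_le _ (ae_of_all _ hnn) hmeas.aemeasurable]
    have hsub : ∀ t : ℝ, 0 < t →
        {y : EuclideanSpace ℝ (Fin n) | t ≤ ‖y‖ ^ (-α)} ⊆ closedBall 0 (t ^ (-α⁻¹)) := by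
      intro t ht y hy
      simp only [mem_setOf_eq] at hy
      have h1 : (‖y‖ ^ (-α)) ^ (-α⁻¹) ≤ t ^ (-α⁻¹) :=
        Real.rpow_le_rpow_of_nonpos ht hy (by simp [hα₀.le, inv_nonneg.2 hα₀.le])
      rw [← Real.rpow_mul (norm_nonneg y), neg_mul_neg, mul_inv_cancel₀ hα₀.ne',
        Real.rpow_one] at h1
      simpa [mem_closedBall_zero_iff] using h1
    have hmble : ∀ t : ℝ, MeasurableSet {y : EuclideanSpace ℝ (Fin n) | t ≤ ‖y‖ ^ (-α)} :=
      fun t => measurableSet_le measurable_const hmeas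
    have hbound : ∀ t ∈ Ioi (0 : ℝ),
        (volume.restrict (closedBall (0 : EuclideanSpace ℝ (Fin n)) ρ))
          {y | t ≤ ‖y‖ ^ (-α)}
        ≤ min (volume (closedBall (0 : EuclideanSpace ℝ (Fin n)) ρ))
            (ENNReal.ofReal ((t ^ (-α⁻¹)) ^ n) *
              volume (ball (0 : EuclideanSpace ℝ (Fin n)) 1)) := by
      intro t ht
      rw [Measure.restrict_apply (hmble t)]
      refine le_min (measure_mono inter_subset_right) ?_
      refine le_trans (measure_mono (inter_subset_left.trans (hsub t ht))) ?_
      rw [Measure.addHaar_closedBall _ _ (Real.rpow_nonneg ht.le _)]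
      simp [finrank_euclideanSpace_fin]
    refine lt_of_le_of_lt (setLIntegral_mono' measurableSet_Ioi hbound) ?_
    have hsplit : Ioi (0:ℝ) ⊆ Ioc (0:ℝ) 1 ∪ Ioi 1 := Ioi_subset_Ioc_union_Ioi
    refine lt_of_le_of_lt (lintegral_mono_set hsplit) ?_
    refine lt_of_le_of_lt (lintegral_union_le _ _ _) (ENNReal.add_lt_top.2 ⟨?_, ?_⟩)
    · refine lt_of_le_of_lt (setLIntegral_mono' measurableSet_Ioc
        (fun t _ => min_le_left _ _)) ?_
      rw [setLIntegral_const]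
      exact ENNReal.mul_lt_top measure_closedBall_lt_top (by simp)
    · refine lt_of_le_of_lt (setLIntegral_mono' measurableSet_Ioi
        (fun t _ => min_le_right _ _)) ?_
      have hrw : ∀ t ∈ Ioi (1:ℝ), ENNReal.ofReal ((t ^ (-α⁻¹)) ^ n) *
          volume (ball (0 : EuclideanSpace ℝ (Fin n)) 1)
          = ENNReal.ofReal (t ^ (-(n/α))) * volume (ball (0 : EuclideanSpace ℝ (Fin n)) 1) := by
        intro t ht
        have ht0 : (0:ℝ) ≤ t := le_of_lt (lt_trans one_pos ht)
        congr 2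
        rw [← Real.rpow_natCast (t ^ (-α⁻¹)) n, ← Real.rpow_mul ht0]
        congr 1
        field_simp
      rw [setLIntegral_congr_fun measurableSet_Ioi hrw]
      rw [lintegral_mul_const' _ _ measure_ball_lt_top.ne]
      refine ENNReal.mul_lt_top ?_ measure_ball_lt_top
      have hint : IntegrableOn (fun t : ℝ => t ^ (-(n/α))) (Ioi (1:ℝ)) := by
        refine integrableOn_Ioi_rpow_of_lt ?_ one_pos
        rw [neg_lt_neg_iff, lt_div_iff₀ hα₀]
        linarith
      exact hint.setLIntegral_lt_top

lemma integrableOn_rpow_neg_norm_of_isBounded {n : ℕ} {α : ℝ} (hα₀ : 0 < α) (hα₁ : α < n)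
    (x : EuclideanSpace ℝ (Fin n)) {s : Set (EuclideanSpace ℝ (Fin n))} (hbd : IsBounded s) :
    IntegrableOn (fun y => ‖x - y‖ ^ (-α)) s := by
  obtain ⟨ρ, hρ⟩ := hbd.subset_closedBall x
  refine IntegrableOn.mono_set ?_ hρ
  have hpre : (fun y : EuclideanSpace ℝ (Fin n) => y - x) ⁻¹' closedBall 0 ρ
      = closedBall x ρ := by
    ext y
    simp [mem_closedBall, dist_eq_norm]
  have hmp : MeasurePreserving (fun y : EuclideanSpace ℝ (Fin n) => y - x) volume volume :=
    measurePreserving_sub_right volume x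
  have hemb : MeasurableEmbedding (fun y : EuclideanSpace ℝ (Fin n) => y - x) :=
    (MeasurableEquiv.subRight x).measurableEmbedding
  have := (hmp.integrableOn_comp_preimage hemb
    (s := closedBall 0 ρ)).2 (integrableOn_rpow_neg_norm_closedBall' hα₀ hα₁ ρ)
  rw [hpre] at this
  refine this.congr_fun (fun y _ => ?_) measurableSet_closedBall
  simp [Function.comp, norm_sub_rev x y]

/-- The Riesz potential `v_E(x) = ∫_E |x-y|^{-α} dy` of a set `E ⊆ ℝⁿ`. -/
noncomputable def rieszPotential {n : ℕ} (α : ℝ) (E : Set (EuclideanSpace ℝ (Fin n)))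
    (x : EuclideanSpace ℝ (Fin n)) : ℝ :=
  ∫ y in E, ‖x - y‖ ^ (-α)

/-- Reflection formula for the Riesz potential: if `E ⊆ ℝⁿ` is bounded measurable, `R` is
reflection across the hyperplane `{x·e₁ = λ}`, `Σ = E ∩ {x·e₁ < λ}` and `R(Σ) ⊆ E` up to a
null set, then with `G = (E ∩ {x·e₁ > λ}) \ R(Σ)` we have
`v_E(R x) − v_E(x) = ∫_G (|R x − y|^{−α} − |x − y|^{−α}) dy` for every `x`. -/
theorem rieszPotential_reflection_identity
    (n : ℕ) (hn : 2 ≤ n) (α : ℝ) (hα₀ : 0 < α) (hα₁ : α < n) (lam : ℝ)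
    (E : Set (EuclideanSpace ℝ (Fin n))) (hE : MeasurableSet E) (hbd : IsBounded E) :
    let e₁ : EuclideanSpace ℝ (Fin n) := EuclideanSpace.single ⟨0, by omega⟩ 1
    let R : EuclideanSpace ℝ (Fin n) → EuclideanSpace ℝ (Fin n) :=
      fun x => x - (2 * ((inner ℝ x e₁ : ℝ) - lam)) • e₁
    let Sig : Set (EuclideanSpace ℝ (Fin n)) :=
      E ∩ {x : EuclideanSpace ℝ (Fin n) | (inner ℝ x e₁ : ℝ) < lam}
    volume (R '' Sig \ E) = 0 →
    let G : Set (EuclideanSpace ℝ (Fin n)) :=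
      (E ∩ {x : EuclideanSpace ℝ (Fin n) | lam < (inner ℝ x e₁ : ℝ)}) \ (R '' Sig)
    ∀ x : EuclideanSpace ℝ (Fin n),
      rieszPotential α E (R x) - rieszPotential α E x
        = ∫ y in G, (‖R x - y‖ ^ (-α) - ‖x - y‖ ^ (-α)) := by
  intro e₁ R Sig hnull G x
  -- basic facts about e₁ and R
  have hee : (inner ℝ e₁ e₁ : ℝ) = 1 := by
    have h := real_inner_self_eq_norm_sq e₁
    rw [h]
    simp [e₁, EuclideanSpace.norm_single]
  have hinner : ∀ z : EuclideanSpace ℝ (Fin n),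
      (inner ℝ (R z) e₁ : ℝ) = 2 * lam - inner ℝ z e₁ := by
    intro z
    simp only [R, inner_sub_left, real_inner_smul_left, hee]
    ring
  have hRR : Function.Involutive R := by
    intro z
    show R z - (2 * ((inner ℝ (R z) e₁ : ℝ) - lam)) • e₁ = z
    rw [hinner z]
    show (z - (2 * ((inner ℝ z e₁ : ℝ) - lam)) • e₁)
        - (2 * ((2 * lam - (inner ℝ z e₁ : ℝ)) - lam)) • e₁ = z
    rw [sub_sub, ← add_smul]
    have hc : (2 * ((inner ℝ z e₁ : ℝ) - lam)) + (2 * ((2 * lam - (inner ℝ z e₁ : ℝ)) - lam)) = 0 := by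
      ring
    rw [hc, zero_smul, sub_zero]
  have hRinj : Function.Injective R := hRR.injective
  -- norm preservation
  have hnormv : ∀ v : EuclideanSpace ℝ (Fin n), ‖v - (2 * (inner ℝ v e₁ : ℝ)) • e₁‖ = ‖v‖ := by
    intro v
    have hsq : ‖v - (2 * (inner ℝ v e₁ : ℝ)) • e₁‖ ^ 2 = ‖v‖ ^ 2 := by
      rw [norm_sub_sq_real, real_inner_smul_right, norm_smul]
      have he1 : ‖e₁‖ = 1 := by simp [e₁, EuclideanSpace.norm_single]
      rw [he1, Real.norm_eq_abs, mul_one, sq_abs]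
      ring
    calc ‖v - (2 * (inner ℝ v e₁ : ℝ)) • e₁‖
        = √(‖v - (2 * (inner ℝ v e₁ : ℝ)) • e₁‖ ^ 2) := (Real.sqrt_sq (norm_nonneg _)).symm
      _ = √(‖v‖ ^ 2) := by rw [hsq]
      _ = ‖v‖ := Real.sqrt_sq (norm_nonneg _)
  have hRsub : ∀ a b : EuclideanSpace ℝ (Fin n),
      R a - R b = (a - b) - (2 * (inner ℝ (a - b) e₁ : ℝ)) • e₁ := by
    intro a b
    simp only [R, inner_sub_left]
    module
  have hnormR : ∀ a b : EuclideanSpace ℝ (Fin n), ‖R a - R b‖ = ‖a - b‖ := by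
    intro a b
    rw [hRsub a b]
    exact hnormv (a - b)
  -- R is measure preserving
  have hcont : Continuous (fun v : EuclideanSpace ℝ (Fin n) => (inner ℝ v e₁ : ℝ)) :=
    continuous_id.inner continuous_const
  have hRcont : Continuous R := by
    exact continuous_id.sub ((continuous_const.mul (hcont.sub continuous_const)).smul continuous_const)
  -- R is measure preserving: linear isometry + translation
  have hLdef : ∀ v : EuclideanSpace ℝ (Fin n),
      (LinearMap.id - (2 : ℝ) • ((innerSL ℝ e₁).toLinearMap.smulRight e₁) :
        EuclideanSpace ℝ (Fin n) →ₗ[ℝ] EuclideanSpace ℝ (Fin n)) v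
      = v - (2 * (inner ℝ v e₁ : ℝ)) • e₁ := by
    intro v
    simp [LinearMap.sub_apply, LinearMap.smul_apply, LinearMap.smulRight_apply,
      innerSL_apply_apply, real_inner_comm v e₁, smul_smul]
  let Li : EuclideanSpace ℝ (Fin n) →ₗᵢ[ℝ] EuclideanSpace ℝ (Fin n) :=
    { toLinearMap := LinearMap.id - (2 : ℝ) • ((innerSL ℝ e₁).toLinearMap.smulRight e₁),
      norm_map' := fun v => by rw [hLdef v]; exact hnormv v }
  have hLiapp : ∀ v, Li v = v - (2 * (inner ℝ v e₁ : ℝ)) • e₁ := hLdef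
  have hLiinv : ∀ v, Li (Li v) = v := by
    intro v
    rw [hLiapp, hLiapp, inner_sub_left, real_inner_smul_left, hee]
    module
  have hLisurj : Function.Surjective Li := fun v => ⟨Li v, hLiinv v⟩
  have hmpR : MeasurePreserving R volume volume := by
    have h1 : MeasurePreserving (LinearIsometryEquiv.ofSurjective Li hLisurj) volume volume :=
      (LinearIsometryEquiv.ofSurjective Li hLisurj).measurePreserving
    have h2 : MeasurePreserving Li volume volume := by
      rwa [LinearIsometryEquiv.coe_ofSurjective] at h1
    have h3 : R = (fun v => v + (2 * lam) • e₁) ∘ (Li : _ → _) := by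
      funext v
      simp only [Function.comp_apply, hLiapp]
      show v - (2 * ((inner ℝ v e₁ : ℝ) - lam)) • e₁ = _
      module
    rw [h3]
    exact (measurePreserving_add_right volume _).comp h2
  -- R is a measurable embedding
  let Req : EuclideanSpace ℝ (Fin n) ≃ᵐ EuclideanSpace ℝ (Fin n) :=
    { toEquiv := Function.Involutive.toPerm R hRR,
      measurable_toFun := hRcont.measurable,
      measurable_invFun := hRcont.measurable }
  have hemb : MeasurableEmbedding R := Req.measurableEmbedding
  have him : ∀ s : Set (EuclideanSpace ℝ (Fin n)), volume (R '' s) = volume s := by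
    intro s
    have himg : R '' s = R ⁻¹' s := by
      ext y
      constructor
      · rintro ⟨z, hz, rfl⟩; simpa [mem_preimage, hRR z] using hz
      · intro hy; exact ⟨R y, hy, hRR y⟩
    rw [himg, hmpR.measure_preimage_emb hemb]
  -- measurability of the pieces
  have hSigm : MeasurableSet Sig :=
    hE.inter (measurableSet_lt hcont.measurable measurable_const)
  have hRSigm : MeasurableSet (R '' Sig) := hemb.measurableSet_image.2 hSigm
  have hGm : MeasurableSet G :=
    (hE.inter (measurableSet_lt measurable_const hcont.measurable)).diff hRSigm
  set A := R '' E with hAdef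
  have hAm : MeasurableSet A := hemb.measurableSet_image.2 hE
  have hAbd : IsBounded A := by
    have hiso : Isometry R :=
      Isometry.of_dist_eq fun a b => by rw [dist_eq_norm, dist_eq_norm, hnormR]
    exact hiso.lipschitz.isBounded_image hbd
  have hRA : R '' A = E := by
    rw [hAdef, image_image]
    simp only [hRR _, image_id']
  -- integrability
  have hfE : IntegrableOn (fun y => ‖x - y‖ ^ (-α)) E :=
    integrableOn_rpow_neg_norm_of_isBounded hα₀ hα₁ x hbd
  have hfA : IntegrableOn (fun y => ‖x - y‖ ^ (-α)) A :=
    integrableOn_rpow_neg_norm_of_isBounded hα₀ hα₁ x hAbd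
  have hGsubE : G ⊆ E := fun y hy => hy.1.1
  have hfG : IntegrableOn (fun y => ‖x - y‖ ^ (-α)) G := hfE.mono_set hGsubE
  have hgG : IntegrableOn (fun y => ‖R x - y‖ ^ (-α)) G :=
    (integrableOn_rpow_neg_norm_of_isBounded hα₀ hα₁ (R x) hbd).mono_set hGsubE
  -- step 1 : change variables in the first potential
  have step1 : (∫ y in E, ‖R x - y‖ ^ (-α)) = ∫ y in A, ‖x - y‖ ^ (-α) := by
    rw [hAdef, hmpR.setIntegral_image_emb hemb (fun y => ‖x - y‖ ^ (-α)) E]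
    refine setIntegral_congr_fun hE fun y _ => ?_
    have h := hnormR x (R y)
    rw [hRR y] at h
    rw [← h]
  have hsplitA : (∫ y in A ∩ E, ‖x - y‖ ^ (-α)) + ∫ y in A \ E, ‖x - y‖ ^ (-α)
      = ∫ y in A, ‖x - y‖ ^ (-α) := integral_inter_add_diff hE hfA
  have hsplitE : (∫ y in E ∩ A, ‖x - y‖ ^ (-α)) + ∫ y in E \ A, ‖x - y‖ ^ (-α)
      = ∫ y in E, ‖x - y‖ ^ (-α) := integral_inter_add_diff hAm hfE
  -- the hyperplane is a null set
  have hplane : volume {y : EuclideanSpace ℝ (Fin n) | (inner ℝ y e₁ : ℝ) = lam} = 0 := by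
    set W : Submodule ℝ (EuclideanSpace ℝ (Fin n)) := LinearMap.ker (innerSL ℝ e₁).toLinearMap with hW
    have hmem : ∀ y : EuclideanSpace ℝ (Fin n),
        y ∈ AffineSubspace.mk' (lam • e₁) W ↔ (inner ℝ y e₁ : ℝ) = lam := by
      intro y
      rw [AffineSubspace.mem_mk', vsub_eq_sub]
      have hker : (y - lam • e₁ ∈ W) ↔ (innerSL ℝ e₁) (y - lam • e₁) = 0 := by
        rw [hW, LinearMap.mem_ker, ContinuousLinearMap.coe_coe]
      rw [hker]
      have : (innerSL ℝ e₁) (y - lam • e₁) = (inner ℝ y e₁ : ℝ) - lam := by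
        rw [innerSL_apply_apply, inner_sub_right, real_inner_smul_right, hee, mul_one,
          real_inner_comm]
      rw [this, sub_eq_zero]
    have hne : AffineSubspace.mk' (lam • e₁) W ≠ ⊤ := by
      intro h
      have hmemtop : (lam • e₁ + e₁) ∈ AffineSubspace.mk' (lam • e₁) W := by
        rw [h]; trivial
      rw [hmem, inner_add_left, real_inner_smul_left, hee] at hmemtop
      nlinarith [hmemtop]
    have hnullW := Measure.addHaar_affineSubspace volume (AffineSubspace.mk' (lam • e₁) W) hne
    have hset : {y : EuclideanSpace ℝ (Fin n) | (inner ℝ y e₁ : ℝ) = lam}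
        = (AffineSubspace.mk' (lam • e₁) W : Set _) := by
      ext y
      exact (hmem y).symm
    rw [hset]
    exact hnullW
  -- exact inclusion G ⊆ E \ A
  have hGEA : G ⊆ E \ A := by
    rintro y ⟨⟨hyE, hylt⟩, hyn⟩
    refine ⟨hyE, fun hyA => hyn ?_⟩
    obtain ⟨z, hzE, hzy⟩ := hyA
    have hz : z = R y := by rw [← hzy, hRR]
    refine ⟨z, ⟨hzE, ?_⟩, hzy⟩
    show (inner ℝ z e₁ : ℝ) < lam
    rw [hz, hinner y]
    have hylt' : lam < (inner ℝ y e₁ : ℝ) := hylt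
    linarith
  have hSigA : volume (Sig \ A) = 0 := by
    have h1 : R '' (Sig \ A) = R '' Sig \ E := by
      rw [image_diff hRinj, hRA]
    calc volume (Sig \ A) = volume (R '' (Sig \ A)) := (him _).symm
      _ = volume (R '' Sig \ E) := by rw [h1]
      _ = 0 := hnull
  have hEAG : volume ((E \ A) \ G) = 0 := by
    refine measure_mono_null ?_ (measure_union_null hSigA hplane)
    rintro y ⟨⟨hyE, hyA⟩, hyG⟩
    rcases lt_trichotomy ((inner ℝ y e₁ : ℝ)) lam with h | h | h
    · exact Or.inl ⟨⟨hyE, h⟩, hyA⟩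
    · exact Or.inr h
    · exact absurd ⟨⟨hyE, h⟩, fun hy => hyA (image_mono inter_subset_left hy)⟩ hyG
  have hEA_eq : (E \ A : Set _) =ᵐ[volume] G := by
    rw [ae_eq_set]
    refine ⟨hEAG, ?_⟩
    rw [diff_eq_empty.2 hGEA]
    exact measure_empty
  have hAE_eq : (A \ E : Set _) =ᵐ[volume] R '' G := by
    have hAE : A \ E = R '' (E \ A) := by rw [image_diff hRinj, hRA, ← hAdef]
    rw [ae_eq_set, hAE]
    constructor
    · rw [← image_diff hRinj, him]
      exact hEAG
    · rw [← image_diff hRinj, him, diff_eq_empty.2 hGEA]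
      exact measure_empty
  have hdiff1 : (∫ y in A \ E, ‖x - y‖ ^ (-α)) = ∫ y in G, ‖R x - y‖ ^ (-α) := by
    rw [setIntegral_congr_set hAE_eq,
      hmpR.setIntegral_image_emb hemb (fun y => ‖x - y‖ ^ (-α)) G]
    refine setIntegral_congr_fun hGm fun y _ => ?_
    have h := hnormR x (R y)
    rw [hRR y] at h
    rw [← h]
  have hdiff2 : (∫ y in E \ A, ‖x - y‖ ^ (-α)) = ∫ y in G, ‖x - y‖ ^ (-α) :=
    setIntegral_congr_set hEA_eq
  have hfinal : (∫ y in A, ‖x - y‖ ^ (-α)) - ∫ y in E, ‖x - y‖ ^ (-α)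
      = (∫ y in A \ E, ‖x - y‖ ^ (-α)) - ∫ y in E \ A, ‖x - y‖ ^ (-α) := by
    rw [← hsplitA, ← hsplitE, inter_comm E A]
    ring
  simp only [rieszPotential]
  rw [step1, hfinal, hdiff1, hdiff2]
  exact (integral_sub hgG hfG).symm
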